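/- Let n ≥ 2, let ω ∈ ℂ be a primitive n-th root of unity, and let x ∈ ℂ with xⁿ ≠ 1 (so that 1 − xωᵏ ≠ 0 for all k). Then: (i) (1/n)·Σ_{k=1}^{n−1} (1−ωᵏ)/(1−xωᵏ) = (1−x^{n−1})/(1−xⁿ); and (ii) for every integer d with 1 ≤ d ≤ n−1, (1/n)·Σ_{k=1}^{n−1} ω^{kd}(1−ωᵏ)/(1−xωᵏ) = x^{n−d−1}(x−1)/(1−xⁿ). (This is the root-of-unity summation identity, with corrected exponents, used to derive the Frenkel–Reshetikhin Poisson brackets of the Λ_p(z) from the Coxeter-element r-matrix in the SL(n) case, where x = qᵐ and d = s−p.) -/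

import Mathlib

open Finset

private lemma rou_filter (n : ℕ) (hn : 2 ≤ n) (ω : ℂ) (hω : ω ^ n = 1)
    (hprim : ∀ k : ℕ, 1 ≤ k → k ≤ n - 1 → ω ^ k ≠ 1) (m : ℕ) :
    ∑ k ∈ Finset.range n, ω ^ (k * m) = if n ∣ m then (n : ℂ) else 0 := by
  have hrw : ∀ k, ω ^ (k * m) = (ω ^ m) ^ k := fun k => by rw [mul_comm, pow_mul]
  rw [Finset.sum_congr rfl fun k _ => hrw k]
  by_cases h : n ∣ m
  · obtain ⟨c, rfl⟩ := h
    simp [pow_mul, hω]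
  · have h1 : m % n ≠ 0 := fun h0 => h (Nat.dvd_of_mod_eq_zero h0)
    have h2 : m % n ≤ n - 1 := Nat.le_sub_one_of_lt (Nat.mod_lt _ (by omega))
    have hωm : ω ^ m ≠ 1 := by
      have : ω ^ m = ω ^ (m % n) := by
        conv_lhs => rw [← Nat.mod_add_div m n, pow_add, pow_mul, hω, one_pow, mul_one]
      rw [this]
      exact hprim _ (Nat.one_le_iff_ne_zero.mpr h1) h2
    have hpow : (ω ^ m) ^ n = 1 := by rw [← pow_mul, mul_comm, pow_mul, hω, one_pow]
    rw [geom_sum_eq hωm, hpow, if_neg h]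
    simp

private lemma main_sum (n : ℕ) (hn : 2 ≤ n) (ω : ℂ) (hω : ω ^ n = 1)
    (hprim : ∀ k : ℕ, 1 ≤ k → k ≤ n - 1 → ω ^ k ≠ 1)
    (x : ℂ) (hx : x ^ n ≠ 1) (d : ℕ) (hd : d < n) :
    ∑ k ∈ Finset.range n, ω ^ (k * d) * (1 - ω ^ k) / (1 - x * ω ^ k) =
      (n : ℂ) * (x ^ ((n - d) % n) - x ^ (n - d - 1)) / (1 - x ^ n) := by
  have hxn : (1 : ℂ) - x ^ n ≠ 0 := sub_ne_zero.mpr fun h => hx h.symm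
  have hxpow : ∀ k, (x * ω ^ k) ^ n = x ^ n := by
    intro k
    rw [mul_pow, ← pow_mul, mul_comm k n, pow_mul, hω, one_pow, mul_one]
  have hden : ∀ k, (1 : ℂ) - x * ω ^ k ≠ 0 := by
    intro k h
    have h1 : x * ω ^ k = 1 := (sub_eq_zero.mp h).symm
    have h2 : (x * ω ^ k) ^ n = 1 := by rw [h1, one_pow]
    rw [hxpow k] at h2
    exact hx h2
  have key : ∀ k, (1 - x * ω ^ k) * ∑ j ∈ Finset.range n, (x * ω ^ k) ^ j = 1 - x ^ n := by
    intro k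
    have h := geom_sum_mul (x * ω ^ k) n
    have h2 := hxpow k
    linear_combination -h - h2
  have term : ∀ k, ω ^ (k * d) * (1 - ω ^ k) / (1 - x * ω ^ k) =
      (∑ j ∈ Finset.range n, x ^ j * (ω ^ (k * (d + j)) - ω ^ (k * (d + j + 1)))) / (1 - x ^ n) := by
    intro k
    rw [div_eq_div_iff (hden k) hxn]
    rw [← key k]
    rw [Finset.sum_mul, Finset.mul_sum, Finset.mul_sum]
    apply Finset.sum_congr rfl
    intro j _
    have e1 : k * (d + j) = k * d + k * j := by ring
    have e2 : k * (d + j + 1) = k * d + k * j + k := by ring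
    rw [e1, e2, pow_add, pow_add, pow_add, mul_pow, ← pow_mul]
    ring
  rw [Finset.sum_congr rfl fun k _ => term k, ← Finset.sum_div]
  congr 1
  rw [Finset.sum_comm]
  have inner : ∀ j ∈ Finset.range n,
      ∑ k ∈ Finset.range n, x ^ j * (ω ^ (k * (d + j)) - ω ^ (k * (d + j + 1))) =
      x ^ j * ((if n ∣ (d + j) then (n : ℂ) else 0) - (if n ∣ (d + j + 1) then (n : ℂ) else 0)) := by
    intro j _
    rw [← Finset.mul_sum, Finset.sum_sub_distrib,
      rou_filter n hn ω hω hprim (d + j), rou_filter n hn ω hω hprim (d + j + 1)]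
  rw [Finset.sum_congr rfl inner]
  have split : ∑ j ∈ Finset.range n, x ^ j *
      ((if n ∣ (d + j) then (n : ℂ) else 0) - (if n ∣ (d + j + 1) then (n : ℂ) else 0)) =
      (∑ j ∈ Finset.range n, x ^ j * (if n ∣ (d + j) then (n : ℂ) else 0)) -
      (∑ j ∈ Finset.range n, x ^ j * (if n ∣ (d + j + 1) then (n : ℂ) else 0)) := by
    rw [← Finset.sum_sub_distrib]
    apply Finset.sum_congr rfl
    intro j _
    ring
  rw [split]
  have s1 : ∑ j ∈ Finset.range n, x ^ j * (if n ∣ (d + j) then (n : ℂ) else 0) =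
      (n : ℂ) * x ^ ((n - d) % n) := by
    rw [Finset.sum_eq_single ((n - d) % n)]
    · have : n ∣ (d + (n - d) % n) := by
        rcases Nat.eq_zero_or_pos d with h0 | h0
        · subst h0; simp
        · have : (n - d) % n = n - d := Nat.mod_eq_of_lt (by omega)
          rw [this]
          have : d + (n - d) = n := by omega
          rw [this]
      rw [if_pos this]; ring
    · intro j hj hne
      have hjn : j < n := Finset.mem_range.mp hj
      rw [if_neg, mul_zero]
      intro hdvd
      obtain ⟨c, hc⟩ := hdvd
      have hmod : (n - d) % n = if d = 0 then 0 else n - d := by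
        rcases Nat.eq_zero_or_pos d with h0 | h0
        · simp [h0]
        · rw [if_neg (by omega), Nat.mod_eq_of_lt (by omega)]
      rcases c with _ | _ | c
      · simp only [Nat.mul_zero] at hc
        rw [hmod] at hne
        simp only [show d = 0 by omega, if_true] at hne
        omega
      · rw [hmod] at hne
        have hd0 : d ≠ 0 := by omega
        rw [if_neg hd0] at hne
        omega
      · have hb : 2 * n ≤ d + j := by
          rw [hc]
          calc 2 * n ≤ n * (c + 2) := by nlinarith
            _ = _ := rfl
        omega
    · intro h
      exact absurd (Finset.mem_range.mpr (Nat.mod_lt _ (by omega))) h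
  have s2 : ∑ j ∈ Finset.range n, x ^ j * (if n ∣ (d + j + 1) then (n : ℂ) else 0) =
      (n : ℂ) * x ^ (n - d - 1) := by
    rw [Finset.sum_eq_single (n - d - 1)]
    · have : n ∣ (d + (n - d - 1) + 1) := by
        have : d + (n - d - 1) + 1 = n := by omega
        rw [this]
      rw [if_pos this]; ring
    · intro j hj hne
      have hjn : j < n := Finset.mem_range.mp hj
      rw [if_neg, mul_zero]
      intro hdvd
      obtain ⟨c, hc⟩ := hdvd
      rcases c with _ | _ | c
      · omega
      · omega
      · have hb : 2 * n ≤ d + j + 1 := by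
          rw [hc]
          calc 2 * n ≤ n * (c + 2) := by nlinarith
            _ = _ := rfl
        omega
    · intro h
      exact absurd (Finset.mem_range.mpr (by omega)) h
  rw [s1, s2]
  ring

/-- Root-of-unity summation identities: if `ω` is a primitive n-th root of unity
and `xⁿ ≠ 1`, then
`(1/n)·Σ_{k=1}^{n-1} (1-ωᵏ)/(1-xωᵏ) = (1-x^{n-1})/(1-xⁿ)` and, for `1 ≤ d ≤ n-1`,
`(1/n)·Σ_{k=1}^{n-1} ω^{kd}(1-ωᵏ)/(1-xωᵏ) = x^{n-d-1}(x-1)/(1-xⁿ)`. -/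
theorem root_of_unity_summation (n : ℕ) (hn : 2 ≤ n) (ω : ℂ)
    (hω : ω ^ n = 1) (hprim : ∀ k : ℕ, 1 ≤ k → k ≤ n - 1 → ω ^ k ≠ 1)
    (x : ℂ) (hx : x ^ n ≠ 1) :
    ((n : ℂ)⁻¹ * ∑ k ∈ Finset.Icc 1 (n - 1), (1 - ω ^ k) / (1 - x * ω ^ k) =
        (1 - x ^ (n - 1)) / (1 - x ^ n)) ∧
    ∀ d : ℕ, 1 ≤ d → d ≤ n - 1 →
      (n : ℂ)⁻¹ * ∑ k ∈ Finset.Icc 1 (n - 1),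
          ω ^ (k * d) * (1 - ω ^ k) / (1 - x * ω ^ k) =
        x ^ (n - d - 1) * (x - 1) / (1 - x ^ n) := by
  have hn0 : (n : ℂ) ≠ 0 := Nat.cast_ne_zero.mpr (by omega)
  have hIcc : Finset.Icc 1 (n - 1) = Finset.Ico 1 n := by
    rw [← Finset.Ico_add_one_right_eq_Icc]
    congr 1
    omega
  have hsum : ∀ f : ℕ → ℂ, f 0 = 0 →
      ∑ k ∈ Finset.Icc 1 (n - 1), f k = ∑ k ∈ Finset.range n, f k := by
    intro f hf
    rw [hIcc, Finset.range_eq_Ico,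
      Finset.sum_eq_sum_Ico_succ_bot (by omega : 0 < n) f, hf, zero_add]
  have hxn : (1 : ℂ) - x ^ n ≠ 0 := sub_ne_zero.mpr fun h => hx h.symm
  constructor
  · have h0 : ∑ k ∈ Finset.Icc 1 (n - 1), (1 - ω ^ k) / (1 - x * ω ^ k) =
        ∑ k ∈ Finset.range n, ω ^ (k * 0) * (1 - ω ^ k) / (1 - x * ω ^ k) := by
      rw [← hsum _ (by simp)]
      apply Finset.sum_congr rfl
      intro k _
      rw [Nat.mul_zero, pow_zero, one_mul]
    rw [h0, main_sum n hn ω hω hprim x hx 0 (by omega)]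
    have : (n - 0) % n = 0 := by simp
    rw [this]
    rw [pow_zero]
    field_simp
    rw [Nat.sub_zero]
  · intro d hd1 hd2
    have hsum2 : ∑ k ∈ Finset.Icc 1 (n - 1), ω ^ (k * d) * (1 - ω ^ k) / (1 - x * ω ^ k) =
        ∑ k ∈ Finset.range n, ω ^ (k * d) * (1 - ω ^ k) / (1 - x * ω ^ k) :=
      hsum _ (by simp)
    rw [hsum2, main_sum n hn ω hω hprim x hx d (by omega)]
    have hmod : (n - d) % n = n - d := Nat.mod_eq_of_lt (by omega)
    rw [hmod]
    have hpow : x ^ (n - d) = x ^ (n - d - 1) * x := by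
      rw [← pow_succ]
      congr 1
      omega
    rw [hpow]
    field_simp
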